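/- For every natural number n ≥ 2 and every real s ≥ 1, with B(n,s) := ∑_{k=1}^{n} (1/n)·(1 − k/n)^s one has B(n,s) > 0 and B(n,s)⁻¹ ≤ min( (2n/(n−1))^s , (s+1)·(n/(n−1))^{s+1} ). -/

import Mathlib

open Finset

-- reindex k ↦ n - k
lemma reindex (n : ℕ) (s : ℝ) (hn : 1 ≤ n) :
    ∑ k ∈ Finset.Icc 1 n, (1 / (n : ℝ)) * (1 - (k : ℝ) / n) ^ s
      = ∑ j ∈ Finset.range n, (1 / (n : ℝ)) * ((j : ℝ) / n) ^ s := by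
  refine Finset.sum_nbij' (fun k => n - k) (fun j => n - j) ?_ ?_ ?_ ?_ ?_
  · intro k hk
    simp only [Finset.mem_Icc] at hk
    simp only [Finset.mem_range]
    omega
  · intro j hj
    simp only [Finset.mem_range] at hj
    simp only [Finset.mem_Icc]
    omega
  · intro k hk; simp only [Finset.mem_Icc] at hk; omega
  · intro j hj; simp only [Finset.mem_range] at hj; omega
  · intro k hk
    simp only [Finset.mem_Icc] at hk
    have hkn : k ≤ n := hk.2
    have : ((n - k : ℕ) : ℝ) = (n : ℝ) - k := by
      rw [Nat.cast_sub hkn]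
    rw [this]
    have hn0 : (n : ℝ) ≠ 0 := by positivity
    congr 2
    field_simp

lemma jensen_bd (n : ℕ) (hn : 2 ≤ n) (s : ℝ) (hs : 1 ≤ s) :
    (((n : ℝ) - 1) / (2 * n)) ^ s ≤ ∑ j ∈ Finset.range n, (1 / (n : ℝ)) * ((j : ℝ) / n) ^ s := by
  have hn0 : (0:ℝ) < n := by positivity
  have h := (convexOn_rpow hs).map_sum_le (t := Finset.range n)
      (w := fun _ => (1 / (n:ℝ))) (p := fun j => (j:ℝ)/n)
      (fun i _ => by positivity)
      (by simp; field_simp)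
      (fun i _ => Set.mem_Ici.2 (by positivity))
  have hsum : ∑ j ∈ Finset.range n, (1 / (n:ℝ)) • ((j:ℝ)/n) = ((n:ℝ) - 1) / (2 * n) := by
    simp only [smul_eq_mul]
    rw [← Finset.mul_sum, ← Finset.sum_div]
    have h2 : (∑ j ∈ Finset.range n, (j:ℝ)) * 2 = n * (n - 1) := by
      have := Finset.sum_range_id_mul_two n
      have := congrArg (Nat.cast : ℕ → ℝ) this
      push_cast [Nat.cast_sub (by omega : 1 ≤ n)] at this
      linarith
    field_simp
    linear_combination h2
  rw [hsum] at h
  simpa using h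

lemma step_bd (s : ℝ) (hs : 1 ≤ s) (j : ℕ) :
    ((j : ℝ) + 1) ^ (s + 1) - (j : ℝ) ^ (s + 1) ≤ (s + 1) * ((j : ℝ) + 1) ^ s := by
  set a : ℝ := (j : ℝ) + 1 with ha
  have ha0 : (0:ℝ) < a := by positivity
  have hb : (1 : ℝ) + (s + 1) * (-(1/a)) ≤ (1 + (-(1/a))) ^ (s + 1) := by
    apply one_add_mul_self_le_rpow_one_add ?_ (by linarith)
    have : 1/a ≤ 1 := by
      rw [div_le_one ha0]; simp [ha]
    linarith
  have h1 : (1 : ℝ) + (-(1/a)) = (j : ℝ) / a := by field_simp [ha]; linarith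
  rw [h1] at hb
  have h2 : ((j:ℝ)/a) ^ (s+1) = (j:ℝ)^(s+1) / a^(s+1) := by
    rw [Real.div_rpow (by positivity) (le_of_lt ha0)]
  rw [h2] at hb
  have h3 : a ^ (s+1) = a ^ s * a := by
    rw [Real.rpow_add_one (ne_of_gt ha0)]
  have hap : (0:ℝ) < a ^ (s+1) := Real.rpow_pos_of_pos ha0 _
  have := mul_le_mul_of_nonneg_right hb (le_of_lt hap)
  rw [div_mul_cancel₀ _ (ne_of_gt hap)] at this
  calc a ^ (s+1) - (j:ℝ)^(s+1) ≤ a^(s+1) - (1 + (s+1)*(-(1/a))) * a^(s+1) := by linarith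
    _ = (s+1) * (a^(s+1)/a) := by field_simp; ring
    _ = (s+1) * a^s := by rw [h3, mul_div_cancel_right₀ _ (ne_of_gt ha0)]

lemma tele_bd (n : ℕ) (hn : 1 ≤ n) (s : ℝ) (hs : 1 ≤ s) :
    ((n : ℝ) - 1) ^ (s + 1) ≤ (s + 1) * ∑ j ∈ Finset.range n, (j : ℝ) ^ s := by
  obtain ⟨m, rfl⟩ : ∃ m, n = m + 1 := ⟨n - 1, by omega⟩
  have htel : ∑ j ∈ Finset.range m, (((j:ℝ)+1)^(s+1) - (j:ℝ)^(s+1)) = ((m:ℝ))^(s+1) - (0:ℝ)^(s+1) := by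
    have := Finset.sum_range_sub (fun j : ℕ => ((j:ℝ))^(s+1)) m
    simpa using this
  have hz : (0:ℝ)^(s+1) = 0 := Real.zero_rpow (by linarith)
  have hsum : ∑ j ∈ Finset.range m, (((j:ℝ)+1)^(s+1) - (j:ℝ)^(s+1))
      ≤ (s+1) * ∑ j ∈ Finset.range m, ((j:ℝ)+1)^s := by
    rw [Finset.mul_sum]
    exact Finset.sum_le_sum fun j _ => step_bd s hs j
  have hshift : ∑ j ∈ Finset.range (m+1), (j:ℝ)^s
      = ∑ j ∈ Finset.range m, ((j:ℝ)+1)^s + (0:ℝ)^s := by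
    rw [Finset.sum_range_succ' (fun j : ℕ => (j:ℝ)^s) m]
    push_cast
    ring
  have hzs : (0:ℝ)^s = 0 := Real.zero_rpow (by linarith)
  have hcast : ((m:ℝ) + 1) - 1 = (m:ℝ) := by ring
  push_cast
  rw [hcast]
  rw [hshift, hzs, add_zero]
  rw [htel, hz, sub_zero] at hsum
  linarith

theorem stmt_3 (n : ℕ) (hn : 2 ≤ n) (s : ℝ) (hs : 1 ≤ s) :
    0 < ∑ k ∈ Finset.Icc 1 n, (1 / (n : ℝ)) * (1 - (k : ℝ) / n) ^ s ∧
    (∑ k ∈ Finset.Icc 1 n, (1 / (n : ℝ)) * (1 - (k : ℝ) / n) ^ s)⁻¹ ≤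
      min ((2 * (n : ℝ) / ((n : ℝ) - 1)) ^ s)
        ((s + 1) * ((n : ℝ) / ((n : ℝ) - 1)) ^ (s + 1)) := by
  have hn1 : 1 ≤ n := by omega
  have hn0 : (0:ℝ) < n := by positivity
  have hn1R : (1:ℝ) < n := by exact_mod_cast hn.trans_lt' one_lt_two
  rw [reindex n s hn1]
  set B := ∑ j ∈ Finset.range n, (1 / (n : ℝ)) * ((j : ℝ) / n) ^ s with hB
  -- positivity
  have hBpos : 0 < B := by
    apply Finset.sum_pos' (fun j _ => by positivity)
    refine ⟨1, Finset.mem_range.2 (by omega), ?_⟩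
    have : (0:ℝ) < ((1:ℕ):ℝ)/n := by positivity
    positivity
  refine ⟨hBpos, le_min ?_ ?_⟩
  · -- first bound via Jensen
    have h1 : (((n : ℝ) - 1) / (2 * n)) ^ s ≤ B := jensen_bd n hn s hs
    have hq : (0:ℝ) < 2 * (n:ℝ) / ((n:ℝ) - 1) := div_pos (by positivity) (by linarith)
    have hc : (0:ℝ) < (2 * (n:ℝ) / ((n:ℝ) - 1)) ^ s :=
      Real.rpow_pos_of_pos hq _
    rw [inv_le_comm₀ hBpos hc]
    have : ((2 * (n:ℝ) / ((n:ℝ) - 1)) ^ s)⁻¹ = (((n:ℝ) - 1) / (2 * n)) ^ s := by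
      rw [← Real.inv_rpow (le_of_lt hq), inv_div]
    rw [this]; exact h1
  · -- second bound via telescoping
    have htele := tele_bd n hn1 s hs
    have hs1 : (0:ℝ) < s + 1 := by linarith
    have hBeq : B = (∑ j ∈ Finset.range n, (j:ℝ)^s) / (n:ℝ)^(s+1) := by
      rw [Finset.sum_div]
      apply Finset.sum_congr rfl
      intro j hj
      rw [Real.div_rpow (by positivity) (le_of_lt hn0),
        Real.rpow_add_one (ne_of_gt hn0)]
      rw [mul_comm, div_mul_div_comm, mul_one]
    have hnp : (0:ℝ) < (n:ℝ)^(s+1) := Real.rpow_pos_of_pos hn0 _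
    have h2 : (((n:ℝ) - 1) / n) ^ (s+1) / (s+1) ≤ B := by
      rw [hBeq, Real.div_rpow (by linarith) (le_of_lt hn0)]
      rw [div_div, div_le_div_iff₀ (by positivity) hnp]
      calc ((n:ℝ)-1)^(s+1) * (n:ℝ)^(s+1)
          ≤ ((s+1) * ∑ j ∈ Finset.range n, (j:ℝ)^s) * (n:ℝ)^(s+1) := by
            apply mul_le_mul_of_nonneg_right htele (le_of_lt hnp)
        _ = (∑ j ∈ Finset.range n, (j:ℝ)^s) * ((n:ℝ)^(s+1) * (s+1)) := by ring
    have hc : (0:ℝ) < (s + 1) * ((n:ℝ) / ((n:ℝ) - 1)) ^ (s+1) := by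
      have hq2 : (0:ℝ) < (n:ℝ)/((n:ℝ)-1) := div_pos hn0 (by linarith)
      have := Real.rpow_pos_of_pos hq2 (s+1)
      positivity
    rw [inv_le_comm₀ hBpos hc]
    have : ((s+1) * ((n:ℝ) / ((n:ℝ) - 1)) ^ (s+1))⁻¹
        = (((n:ℝ) - 1) / n) ^ (s+1) / (s+1) := by
      have hq2 : (0:ℝ) < (n:ℝ)/((n:ℝ)-1) := div_pos hn0 (by linarith)
      rw [mul_inv, ← Real.inv_rpow (le_of_lt hq2), inv_div]
      ring
    rw [this]; exact h2
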